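/- The enlarged a priori supports have uniformly bounded overlapping: with ẽ_{B,(1)}(h) := sup_{k∈ℤ^d} sup_{x∈Σ̃_{h,k}} ‖B̄_{(1),k}(x) − B̄(x)‖_∞, the overlapping constant Θ̃(h) := sup_{x∈ℝ^d} #{k ∈ ℤ^d : x ∈ Σ̃_{h,k}} satisfies Θ̃(h) ≤ C (1 + h^{−1} ẽ_{B,(1)}(h))^d for a constant C depending only on ρ⁰ and d. -/

import Mathlib

open scoped NNReal
open Set

/-- Grid node `x⁰_k := h k`. -/
noncomputable def node (d : ℕ) (h : ℝ) (k : Fin d → ℤ) : Fin d → ℝ :=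
  fun i => h * (k i : ℝ)

/-- Particle shape function `φ⁰_{h,k}(x) := h^{-d} φ(h⁻¹ x - k)`. -/
noncomputable def part (d : ℕ) (h : ℝ) (φ : (Fin d → ℝ) → ℝ)
    (k : Fin d → ℤ) (x : Fin d → ℝ) : ℝ :=
  (h ^ d)⁻¹ * φ (fun i => x i / h - (k i : ℝ))

/-- Linearized backward flow `B̄_{(1),k}(x) := x⁰_k + J_k⁻¹ (x − F̄(x⁰_k))`. -/
noncomputable def B1 (d : ℕ) (h : ℝ) (F : (Fin d → ℝ) ≃ (Fin d → ℝ))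
    (k : Fin d → ℤ) (x : Fin d → ℝ) : Fin d → ℝ :=
  node d h k +
    fderiv ℝ (F.symm : (Fin d → ℝ) → (Fin d → ℝ)) (F (node d h k)) (x - F (node d h k))

/-- Linearized forward flow `F̄_{(1),k}(x̂) := F̄(x⁰_k) + J_k (x̂ − x⁰_k)`. -/
noncomputable def F1 (d : ℕ) (h : ℝ) (F : (Fin d → ℝ) ≃ (Fin d → ℝ))
    (k : Fin d → ℤ) (y : Fin d → ℝ) : Fin d → ℝ :=
  F (node d h k) +
    fderiv ℝ (F : (Fin d → ℝ) → (Fin d → ℝ)) (node d h k) (y - node d h k)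

/-- Enlarged radius `ρ̃_{h,k} := ρ⁰ + h⁻¹ sup_{x ∈ F̄(Σ⁰_{h,k})} ‖B̄_{(1),k}(x) − B̄(x)‖_∞`. -/
noncomputable def ρt (d : ℕ) (h ρ0 : ℝ) (φ : (Fin d → ℝ) → ℝ)
    (F : (Fin d → ℝ) ≃ (Fin d → ℝ)) (k : Fin d → ℤ) : ℝ :=
  ρ0 + h⁻¹ * ⨆ x : (F '' Function.support (part d h φ k)),
      ‖B1 d h F k x.1 - F.symm x.1‖

/-- Enlarged a priori support `Σ̃_{h,k} := F̄_{(1),k}(B_∞(x⁰_k, h ρ̃_{h,k}))`. -/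
noncomputable def St (d : ℕ) (h ρ0 : ℝ) (φ : (Fin d → ℝ) → ℝ)
    (F : (Fin d → ℝ) ≃ (Fin d → ℝ)) (k : Fin d → ℤ) : Set (Fin d → ℝ) :=
  F1 d h F k '' Metric.closedBall (node d h k) (h * ρt d h ρ0 φ F k)

lemma B1_F1 (d : ℕ) (h : ℝ) (F : (Fin d → ℝ) ≃ (Fin d → ℝ))
    (hF : ContDiff ℝ 1 (F : (Fin d → ℝ) → (Fin d → ℝ)))
    (hFs : ContDiff ℝ 1 (F.symm : (Fin d → ℝ) → (Fin d → ℝ)))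
    (k : Fin d → ℤ) (y : Fin d → ℝ) :
    B1 d h F k (F1 d h F k y) = y := by
  set a := node d h k with ha
  have hcomp : (fderiv ℝ (F.symm : (Fin d → ℝ) → (Fin d → ℝ)) (F a)).comp
      (fderiv ℝ (F : (Fin d → ℝ) → (Fin d → ℝ)) a) = ContinuousLinearMap.id ℝ _ := by
    rw [← fderiv_comp (x := a) (hFs.differentiable one_ne_zero _) (hF.differentiable one_ne_zero _)]
    have hid : ((F.symm : (Fin d → ℝ) → (Fin d → ℝ)) ∘ (F : (Fin d → ℝ) → (Fin d → ℝ))) = id :=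
      funext fun z => F.symm_apply_apply z
    rw [hid, fderiv_id]
  simp only [B1, F1, ← ha]
  rw [add_sub_cancel_left, ← ContinuousLinearMap.comp_apply, hcomp]
  simp

lemma F1_B1 (d : ℕ) (h : ℝ) (F : (Fin d → ℝ) ≃ (Fin d → ℝ))
    (hF : ContDiff ℝ 1 (F : (Fin d → ℝ) → (Fin d → ℝ)))
    (hFs : ContDiff ℝ 1 (F.symm : (Fin d → ℝ) → (Fin d → ℝ)))
    (k : Fin d → ℤ) (x : Fin d → ℝ) :
    F1 d h F k (B1 d h F k x) = x := by
  set a := node d h k with ha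
  have hcomp : (fderiv ℝ (F : (Fin d → ℝ) → (Fin d → ℝ)) a).comp
      (fderiv ℝ (F.symm : (Fin d → ℝ) → (Fin d → ℝ)) (F a)) = ContinuousLinearMap.id ℝ _ := by
    have hc := fderiv_comp (𝕜 := ℝ) (g := (F : (Fin d → ℝ) → (Fin d → ℝ)))
      (f := (F.symm : (Fin d → ℝ) → (Fin d → ℝ))) (x := F a)
      (hF.differentiable one_ne_zero _) (hFs.differentiable one_ne_zero _)
    rw [F.symm_apply_apply] at hc
    have hid : ((F : (Fin d → ℝ) → (Fin d → ℝ)) ∘ (F.symm : (Fin d → ℝ) → (Fin d → ℝ))) = id :=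
      funext fun z => F.apply_symm_apply z
    rw [hid, fderiv_id] at hc
    exact hc.symm
  simp only [B1, F1, ← ha]
  rw [add_sub_cancel_left, ← ContinuousLinearMap.comp_apply, hcomp]
  simp

/-- the enlarged a priori supports have uniformly bounded overlapping:
with `ẽ_{B,(1)}(h)` the error of the linearized backward flows on `Σ̃_{h,k}`, the
overlapping constant satisfies `Θ̃(h) ≤ C (1 + h⁻¹ ẽ_{B,(1)}(h))^d`, `C = C(ρ⁰, d)`. -/
theorem enlarged_supports_bounded_overlapping
    (d : ℕ) (hd : 1 ≤ d) (ρ0 : ℝ) (hρ0 : 0 < ρ0) :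
    ∃ C : ℝ, 0 < C ∧
      ∀ (h : ℝ), 0 < h →
      ∀ (φ : (Fin d → ℝ) → ℝ) (Lφ : ℝ≥0), LipschitzWith Lφ φ →
        (∀ x, φ x ≠ 0 → ‖x‖ ≤ ρ0) →
      ∀ (F : (Fin d → ℝ) ≃ (Fin d → ℝ)),
        ContDiff ℝ 1 (F : (Fin d → ℝ) → (Fin d → ℝ)) →
        ContDiff ℝ 1 (F.symm : (Fin d → ℝ) → (Fin d → ℝ)) →
        (∀ k : Fin d → ℤ,
          BddAbove (Set.range fun x : (F '' Function.support (part d h φ k)) =>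
            ‖B1 d h F k x.1 - F.symm x.1‖)) →
      ∀ (etB : ℝ), 0 ≤ etB →
        (∀ k : Fin d → ℤ, ∀ x ∈ St d h ρ0 φ F k,
          ‖B1 d h F k x - F.symm x‖ ≤ etB) →
      ∀ x : Fin d → ℝ,
        {k : Fin d → ℤ | x ∈ St d h ρ0 φ F k}.Finite ∧
        (({k : Fin d → ℤ | x ∈ St d h ρ0 φ F k}).ncard : ℝ)
          ≤ C * (1 + h⁻¹ * etB) ^ d := by
  refine ⟨(2 * ρ0 + 4) ^ d, by positivity, ?_⟩
  intro h hh φ Lφ hLφ hsupp F hF hFs hbdd etB hetB0 hetB x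
  set z := F.symm x with hz
  set t := h⁻¹ * etB with ht
  have ht0 : 0 ≤ t := mul_nonneg (by positivity) hetB0
  set R := ρ0 + 2 * t with hR
  have hR0 : 0 < R := by positivity
  -- Key estimate: membership forces z to be close to the node
  have key : ∀ k : Fin d → ℤ, x ∈ St d h ρ0 φ F k →
      ∀ i, |z i / h - (k i : ℝ)| ≤ R := by
    intro k hk
    obtain ⟨y, hy, hxy⟩ := hk
    have hB1x : B1 d h F k x = y := by rw [← hxy, B1_F1 d h F hF hFs]
    -- F '' supp ⊆ St
    have hFs_sub : F '' Function.support (part d h φ k) ⊆ St d h ρ0 φ F k := by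
      rintro _ ⟨w, hw, rfl⟩
      have hφ : φ (fun i => w i / h - (k i : ℝ)) ≠ 0 := by
        intro h0
        exact hw (by simp [part, h0])
      have hwnorm : ‖(fun i => w i / h - ((k i : ℤ) : ℝ))‖ ≤ ρ0 := hsupp _ hφ
      have hwa : ‖w - node d h k‖ ≤ h * ρ0 := by
        rw [pi_norm_le_iff_of_nonneg (by positivity)]
        intro i
        have h1 : |w i / h - (k i : ℝ)| ≤ ρ0 :=
          le_trans (norm_le_pi_norm (fun i => w i / h - ((k i : ℤ) : ℝ)) i) hwnorm
        have h2 : (w - node d h k) i = h * (w i / h - (k i : ℝ)) := by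
          simp only [Pi.sub_apply, node]
          field_simp
        rw [h2, Real.norm_eq_abs, abs_mul, abs_of_pos hh]
        exact mul_le_mul_of_nonneg_left h1 hh.le
      have hmem : F w ∈ F '' Function.support (part d h φ k) := ⟨w, hw, rfl⟩
      have hle : ‖B1 d h F k (F w) - F.symm (F w)‖ ≤
          ⨆ x : (F '' Function.support (part d h φ k)), ‖B1 d h F k x.1 - F.symm x.1‖ :=
        le_ciSup (hbdd k) ⟨F w, hmem⟩
      rw [F.symm_apply_apply] at hle
      have hball : B1 d h F k (F w) ∈ Metric.closedBall (node d h k) (h * ρt d h ρ0 φ F k) := by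
        rw [Metric.mem_closedBall, dist_eq_norm]
        have htri : ‖B1 d h F k (F w) - node d h k‖ ≤
            ‖B1 d h F k (F w) - w‖ + ‖w - node d h k‖ := by
          have := norm_add_le (B1 d h F k (F w) - w) (w - node d h k)
          rwa [sub_add_sub_cancel] at this
        have hrad : h * ρt d h ρ0 φ F k = h * ρ0 +
            ⨆ x : (F '' Function.support (part d h φ k)), ‖B1 d h F k x.1 - F.symm x.1‖ := by
          rw [ρt, mul_add, ← mul_assoc, mul_inv_cancel₀ hh.ne', one_mul]
        rw [hrad]
        linarith
      exact ⟨B1 d h F k (F w), hball, F1_B1 d h F hF hFs k (F w)⟩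
    -- hence the sup is ≤ etB
    have hsle : (⨆ x : (F '' Function.support (part d h φ k)),
        ‖B1 d h F k x.1 - F.symm x.1‖) ≤ etB :=
      Real.iSup_le (fun p => hetB k p.1 (hFs_sub p.2)) hetB0
    have hρt : h * ρt d h ρ0 φ F k ≤ h * ρ0 + etB := by
      have : h * ρt d h ρ0 φ F k = h * ρ0 +
          ⨆ x : (F '' Function.support (part d h φ k)), ‖B1 d h F k x.1 - F.symm x.1‖ := by
        rw [ρt, mul_add, ← mul_assoc, mul_inv_cancel₀ hh.ne', one_mul]
      linarith [this]
    -- ‖z - node‖ ≤ h ρ0 + 2 etB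
    have hxSt : x ∈ St d h ρ0 φ F k := ⟨y, hy, hxy⟩
    have h1 : ‖B1 d h F k x - z‖ ≤ etB := hetB k x hxSt
    have h2 : ‖B1 d h F k x - node d h k‖ ≤ h * ρ0 + etB := by
      rw [hB1x]
      have := hy
      rw [Metric.mem_closedBall, dist_eq_norm] at this
      linarith
    have hnorm : ‖z - node d h k‖ ≤ h * ρ0 + 2 * etB := by
      have htri : ‖z - node d h k‖ ≤ ‖z - B1 d h F k x‖ + ‖B1 d h F k x - node d h k‖ := by
        have := norm_add_le (z - B1 d h F k x) (B1 d h F k x - node d h k)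
        rwa [sub_add_sub_cancel] at this
      rw [norm_sub_rev z (B1 d h F k x)] at htri
      linarith
    intro i
    have hci : ‖(z - node d h k) i‖ ≤ h * ρ0 + 2 * etB :=
      le_trans (norm_le_pi_norm _ i) hnorm
    have heq : z i / h - (k i : ℝ) = (z i - h * (k i : ℝ)) / h := by field_simp
    have hzi : (z - node d h k) i = z i - h * (k i : ℝ) := by simp [node]
    rw [hzi, Real.norm_eq_abs] at hci
    rw [heq, abs_div, abs_of_pos hh, div_le_iff₀ hh]
    have hRh : R * h = h * ρ0 + 2 * etB := by
      rw [hR, ht]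
      field_simp
    linarith
  -- the box of admissible k's
  set a : Fin d → ℤ := fun i => ⌈z i / h - R⌉ with haa
  set b : Fin d → ℤ := fun i => ⌊z i / h + R⌋ with hbb
  have hsub : {k : Fin d → ℤ | x ∈ St d h ρ0 φ F k} ⊆ ↑(Finset.Icc a b) := by
    intro k hk
    have hki := key k hk
    simp only [Finset.coe_Icc, Set.mem_Icc]
    constructor
    · intro i
      have := abs_le.mp (hki i)
      exact Int.ceil_le.mpr (by linarith [this.2])
    · intro i
      have := abs_le.mp (hki i)
      exact Int.le_floor.mpr (by linarith [this.1])
  have hfin : {k : Fin d → ℤ | x ∈ St d h ρ0 φ F k}.Finite :=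
    (Finset.Icc a b).finite_toSet.subset hsub
  refine ⟨hfin, ?_⟩
  have hcard : {k : Fin d → ℤ | x ∈ St d h ρ0 φ F k}.ncard ≤ (Finset.Icc a b).card := by
    rw [← Set.ncard_coe_finset]
    exact Set.ncard_le_ncard hsub (Finset.Icc a b).finite_toSet
  have hfac : ∀ i : Fin d, (((b i + 1 - a i).toNat : ℕ) : ℝ) ≤ 2 * R + 1 := by
    intro i
    have hbz : (b i : ℝ) ≤ z i / h + R := Int.floor_le _
    have haz : z i / h - R ≤ (a i : ℝ) := Int.le_ceil _
    rcases le_or_gt (b i + 1 - a i) 0 with hle | hlt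
    · rw [Int.toNat_of_nonpos hle]
      simp only [Nat.cast_zero]
      linarith
    · have hcast : (((b i + 1 - a i).toNat : ℕ) : ℝ) = (b i : ℝ) + 1 - (a i : ℝ) := by
        have := Int.toNat_of_nonneg hlt.le
        have h2 : (((b i + 1 - a i).toNat : ℤ) : ℝ) = ((b i + 1 - a i : ℤ) : ℝ) := by
          exact_mod_cast congrArg (Int.cast : ℤ → ℝ) this
        push_cast at h2 ⊢
        linarith
      rw [hcast]
      linarith
  calc (({k : Fin d → ℤ | x ∈ St d h ρ0 φ F k}).ncard : ℝ)
      ≤ ((Finset.Icc a b).card : ℝ) := by exact_mod_cast hcard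
    _ = ∏ i : Fin d, (((b i + 1 - a i).toNat : ℕ) : ℝ) := by
        rw [Pi.card_Icc]
        push_cast [Int.card_Icc]
        rfl
    _ ≤ ∏ _i : Fin d, (2 * R + 1) :=
        Finset.prod_le_prod (fun i _ => Nat.cast_nonneg _) (fun i _ => hfac i)
    _ = (2 * R + 1) ^ d := by
        rw [Finset.prod_const, Finset.card_univ, Fintype.card_fin]
    _ ≤ (2 * ρ0 + 4) ^ d * (1 + t) ^ d := by
        rw [← mul_pow]
        refine pow_le_pow_left₀ (by positivity) ?_ d
        rw [hR]
        nlinarith [mul_nonneg hρ0.le ht0]
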